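/- Let A be an m×n complex matrix of rank r with singular value decomposition A = U₁Σ₁V₁*, and B an m×n complex matrix of rank s with singular value decomposition B = Ũ₁Σ̃₁Ṽ₁*, and let E = B − A. Then ‖B† − A†‖_F² ≤ ‖B†‖₂²‖Ũ₁*U₂‖_F² + ‖A†‖₂²‖Ṽ₂*V₁‖_F² + ‖B†EA†‖_F², and ‖B† − A†‖_F² ≥ ‖Ũ₁*U₂‖_F²/‖B‖₂² + ‖Ṽ₂*V₁‖_F²/‖A‖₂² + ‖B†EA†‖_F². -/

import Mathlib

open Matrix

/-- The square of the Frobenius norm of a complex matrix. -/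
noncomputable def frobSq {α β : Type*} [Fintype α] [Fintype β] (M : Matrix α β ℂ) : ℝ :=
  ∑ i, ∑ j, ‖M i j‖ ^ 2

/-- The spectral norm (ℓ²-operator norm) of a complex matrix. -/
noncomputable def spec {α β : Type*} [Fintype α] [Fintype β] [DecidableEq β]
    (M : Matrix α β ℂ) : ℝ :=
  ‖LinearMap.toContinuousLinearMap (Matrix.toEuclideanLin M)‖

namespace Stmt18Aux

variable {α β γ δ : Type*}

lemma mul_assoc_cancel_left [Fintype α] [Fintype β] [DecidableEq α]
    {P : Matrix α β ℂ} {Q : Matrix β α ℂ} (h : P * Q = 1) (X : Matrix α γ ℂ) :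
    P * (Q * X) = X := by
  rw [← Matrix.mul_assoc, h, Matrix.one_mul]

lemma frobSq_nonneg [Fintype α] [Fintype β] (M : Matrix α β ℂ) : 0 ≤ frobSq M :=
  Finset.sum_nonneg fun _ _ => Finset.sum_nonneg fun _ _ => sq_nonneg _

lemma frobSq_neg [Fintype α] [Fintype β] (M : Matrix α β ℂ) : frobSq (-M) = frobSq M := by
  simp [frobSq]

lemma frobSq_conjTranspose [Fintype α] [Fintype β] (M : Matrix α β ℂ) :
    frobSq Mᴴ = frobSq M := by
  rw [frobSq, frobSq, Finset.sum_comm]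
  simp [Matrix.conjTranspose_apply]

lemma re_star_mul (z : ℂ) : (star z * z).re = ‖z‖ ^ 2 := by
  rw [Complex.star_def, ← Complex.normSq_eq_conj_mul_self, Complex.ofReal_re,
    ← Complex.sq_norm]

lemma spec_nonneg [Fintype α] [Fintype β] [DecidableEq β] (M : Matrix α β ℂ) : 0 ≤ spec M :=
  norm_nonneg _

lemma norm_euclid_sq [Fintype α] (w : α → ℂ) :
    ‖((WithLp.equiv 2 (α → ℂ)).symm w : EuclideanSpace ℂ α)‖ ^ 2 = ∑ i, ‖w i‖ ^ 2 := by
  rw [EuclideanSpace.norm_eq, Real.sq_sqrt (by positivity)]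
  simp

lemma sum_sq_mulVec_le [Fintype α] [Fintype β] [DecidableEq β] (M : Matrix α β ℂ) (v : β → ℂ) :
    ∑ i, ‖(M *ᵥ v) i‖ ^ 2 ≤ spec M ^ 2 * ∑ j, ‖v j‖ ^ 2 := by
  have h := (LinearMap.toContinuousLinearMap (Matrix.toEuclideanLin M)).le_opNorm
      ((WithLp.equiv 2 (β → ℂ)).symm v)
  rw [LinearMap.coe_toContinuousLinearMap'] at h
  have h2 := pow_le_pow_left₀ (norm_nonneg _) h 2
  rw [mul_pow] at h2
  rw [Matrix.toEuclideanLin_apply] at h2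
  simp only [Equiv.apply_symm_apply] at h2
  rw [norm_euclid_sq] at h2
  have h3 : ‖WithLp.toLp 2 (M *ᵥ ((WithLp.equiv 2 (β → ℂ)).symm v).ofLp)‖ ^ 2
      = ∑ i, ‖(M *ᵥ v) i‖ ^ 2 := norm_euclid_sq (M *ᵥ v)
  rw [h3] at h2
  exact h2

lemma frobSq_mul_le [Fintype α] [Fintype β] [Fintype γ] [DecidableEq β]
    (M : Matrix α β ℂ) (N : Matrix β γ ℂ) :
    frobSq (M * N) ≤ spec M ^ 2 * frobSq N := by
  have key : ∀ j, ∑ i, ‖(M * N) i j‖ ^ 2 ≤ spec M ^ 2 * ∑ i, ‖N i j‖ ^ 2 := by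
    intro j
    have h := sum_sq_mulVec_le M (fun k => N k j)
    simpa [Matrix.mulVec, Matrix.mul_apply, dotProduct] using h
  calc frobSq (M * N) = ∑ j, ∑ i, ‖(M * N) i j‖ ^ 2 := by rw [frobSq]; exact Finset.sum_comm
    _ ≤ ∑ j, spec M ^ 2 * ∑ i, ‖N i j‖ ^ 2 := Finset.sum_le_sum fun j _ => key j
    _ = spec M ^ 2 * frobSq N := by
        rw [← Finset.mul_sum, frobSq]
        congr 1
        exact Finset.sum_comm

lemma spec_conjTranspose [Fintype α] [Fintype β] [DecidableEq α] [DecidableEq β]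
    (M : Matrix α β ℂ) : spec Mᴴ = spec M := by
  rw [spec, spec, Matrix.toEuclideanLin_conjTranspose_eq_adjoint,
    LinearMap.adjoint_toContinuousLinearMap]
  exact LinearIsometryEquiv.norm_map ContinuousLinearMap.adjoint _

lemma spec_mul_le [Fintype α] [Fintype β] [Fintype γ] [DecidableEq β] [DecidableEq γ]
    (M : Matrix α β ℂ) (N : Matrix β γ ℂ) : spec (M * N) ≤ spec M * spec N := by
  apply ContinuousLinearMap.opNorm_le_bound _ (mul_nonneg (spec_nonneg M) (spec_nonneg N))
  intro x
  have e : LinearMap.toContinuousLinearMap (Matrix.toEuclideanLin (M * N)) x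
      = LinearMap.toContinuousLinearMap (Matrix.toEuclideanLin M)
        (LinearMap.toContinuousLinearMap (Matrix.toEuclideanLin N) x) := by
    simp [LinearMap.coe_toContinuousLinearMap', Matrix.toEuclideanLin_apply,
      Matrix.mulVec_mulVec]
  rw [e]
  calc ‖_‖ ≤ spec M * ‖LinearMap.toContinuousLinearMap (Matrix.toEuclideanLin N) x‖ :=
        (LinearMap.toContinuousLinearMap (Matrix.toEuclideanLin M)).le_opNorm _
    _ ≤ spec M * (spec N * ‖x‖) := by
        exact mul_le_mul_of_nonneg_left
          ((LinearMap.toContinuousLinearMap (Matrix.toEuclideanLin N)).le_opNorm x)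
          (spec_nonneg M)
    _ = spec M * spec N * ‖x‖ := by ring

lemma sum_sq_mulVec_semiUnitary [Fintype α] [Fintype β] [DecidableEq β] {W : Matrix α β ℂ}
    (h : Wᴴ * W = 1) (v : β → ℂ) :
    ∑ i, ‖(W *ᵥ v) i‖ ^ 2 = ∑ j, ‖v j‖ ^ 2 := by
  have key : star (W *ᵥ v) ⬝ᵥ (W *ᵥ v) = star v ⬝ᵥ v := by
    rw [Matrix.star_mulVec, dotProduct_mulVec, Matrix.vecMul_vecMul, h,
      Matrix.vecMul_one]
  have e1 : ∀ (w : α → ℂ), (star w ⬝ᵥ w).re = ∑ i, ‖w i‖ ^ 2 := by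
    intro w
    rw [dotProduct, Complex.re_sum]
    exact Finset.sum_congr rfl fun i _ => re_star_mul (w i)
  have e2 : ∀ (w : β → ℂ), (star w ⬝ᵥ w).re = ∑ i, ‖w i‖ ^ 2 := by
    intro w
    rw [dotProduct, Complex.re_sum]
    exact Finset.sum_congr rfl fun i _ => re_star_mul (w i)
  rw [← e1, ← e2, key]

lemma frobSq_unitary_left [Fintype α] [Fintype β] [Fintype γ] [DecidableEq β] {W : Matrix α β ℂ}
    (h : Wᴴ * W = 1) (N : Matrix β γ ℂ) : frobSq (W * N) = frobSq N := by
  calc frobSq (W * N) = ∑ j, ∑ i, ‖(W * N) i j‖ ^ 2 := by rw [frobSq]; exact Finset.sum_comm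
    _ = ∑ j, ∑ i, ‖N i j‖ ^ 2 := by
        refine Finset.sum_congr rfl fun j _ => ?_
        have := sum_sq_mulVec_semiUnitary h (fun k => N k j)
        simpa [Matrix.mulVec, Matrix.mul_apply, dotProduct] using this
    _ = frobSq N := by rw [frobSq]; exact Finset.sum_comm.symm

lemma frobSq_unitary_right [Fintype α] [Fintype β] [Fintype γ] [DecidableEq β] {N : Matrix β γ ℂ}
    (h : N * Nᴴ = 1) (M : Matrix α β ℂ) : frobSq (M * N) = frobSq M := by
  rw [← frobSq_conjTranspose (M * N), Matrix.conjTranspose_mul,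
    frobSq_unitary_left (by rw [Matrix.conjTranspose_conjTranspose]; exact h),
    frobSq_conjTranspose]

lemma spec_semiUnitary_le [Fintype α] [Fintype β] [DecidableEq β] {W : Matrix α β ℂ}
    (h : Wᴴ * W = 1) : spec W ≤ 1 := by
  apply ContinuousLinearMap.opNorm_le_bound _ zero_le_one
  intro x
  rw [one_mul, LinearMap.coe_toContinuousLinearMap', Matrix.toEuclideanLin_apply]
  rw [EuclideanSpace.norm_eq, EuclideanSpace.norm_eq]
  apply le_of_eq
  congr 1
  have := sum_sq_mulVec_semiUnitary h ((WithLp.equiv 2 (β → ℂ)) x)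
  simpa using this

lemma frobSq_mul_right_le [Fintype α] [Fintype β] [Fintype γ] [DecidableEq β] [DecidableEq γ]
    (M : Matrix α β ℂ) (N : Matrix β γ ℂ) :
    frobSq (M * N) ≤ spec N ^ 2 * frobSq M := by
  rw [← frobSq_conjTranspose (M * N), Matrix.conjTranspose_mul, ← frobSq_conjTranspose M,
    ← spec_conjTranspose N]
  exact frobSq_mul_le _ _

lemma frobSq_eq_re_trace [Fintype α] [Fintype β] (M : Matrix α β ℂ) :
    frobSq M = (Matrix.trace (Mᴴ * M)).re := by
  have : (Matrix.trace (Mᴴ * M)).re = ∑ j, ∑ i, ‖M i j‖ ^ 2 := by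
    rw [Matrix.trace, Complex.re_sum]
    refine Finset.sum_congr rfl fun j _ => ?_
    rw [Matrix.diag_apply, Matrix.mul_apply, Complex.re_sum]
    exact Finset.sum_congr rfl fun i _ => re_star_mul (M i j)
  rw [frobSq, this, Finset.sum_comm]

lemma frobSq_add_add [Fintype α] [Fintype β] (X Y Z : Matrix α β ℂ)
    (hXY : Matrix.trace (Xᴴ * Y) = 0) (hXZ : Matrix.trace (Xᴴ * Z) = 0)
    (hYZ : Matrix.trace (Yᴴ * Z) = 0) :
    frobSq (X + Y + Z) = frobSq X + frobSq Y + frobSq Z := by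
  have flip : ∀ (P Q : Matrix α β ℂ), Matrix.trace (Pᴴ * Q) = 0 →
      Matrix.trace (Qᴴ * P) = 0 := by
    intro P Q hPQ
    have := congrArg star hPQ
    rwa [← Matrix.trace_conjTranspose, Matrix.conjTranspose_mul,
      Matrix.conjTranspose_conjTranspose, star_zero] at this
  have hYX := flip _ _ hXY
  have hZX := flip _ _ hXZ
  have hZY := flip _ _ hYZ
  rw [frobSq_eq_re_trace, frobSq_eq_re_trace, frobSq_eq_re_trace, frobSq_eq_re_trace]
  simp only [Matrix.conjTranspose_add, Matrix.add_mul, Matrix.mul_add, Matrix.trace_add,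
    hXY, hXZ, hYZ, hYX, hZX, hZY, add_zero, zero_add, Complex.add_re]

lemma trace_zero_left [Fintype α] [Fintype β] [Fintype γ] [Fintype δ]
    {W : Matrix α β ℂ} {W' : Matrix α γ ℂ} (h : Wᴴ * W' = 0)
    (X : Matrix β δ ℂ) (Y : Matrix γ δ ℂ) :
    Matrix.trace ((W * X)ᴴ * (W' * Y)) = 0 := by
  rw [Matrix.conjTranspose_mul, Matrix.mul_assoc, ← Matrix.mul_assoc Wᴴ, h,
    Matrix.zero_mul, Matrix.mul_zero, Matrix.trace_zero]

lemma trace_zero_right [Fintype α] [Fintype β] [Fintype γ] [Fintype δ]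
    {W : Matrix β α ℂ} {W' : Matrix γ α ℂ} (h : W' * Wᴴ = 0)
    (X : Matrix δ β ℂ) (Y : Matrix δ γ ℂ) :
    Matrix.trace ((X * W)ᴴ * (Y * W')) = 0 := by
  rw [Matrix.conjTranspose_mul, Matrix.mul_assoc, Matrix.trace_mul_comm,
    Matrix.mul_assoc, Matrix.mul_assoc, h, Matrix.mul_zero, Matrix.mul_zero,
    Matrix.trace_zero]

lemma blocks_ortho [Fintype α] [Fintype β] [Fintype γ] [DecidableEq β] [DecidableEq γ]
    {W₁ : Matrix α β ℂ} {W₂ : Matrix α γ ℂ}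
    (h : (fromCols W₁ W₂)ᴴ * fromCols W₁ W₂ = 1) :
    W₁ᴴ * W₁ = 1 ∧ W₁ᴴ * W₂ = 0 ∧ W₂ᴴ * W₂ = 1 := by
  rw [Matrix.conjTranspose_fromCols_eq_fromRows_conjTranspose,
    Matrix.fromRows_mul_fromCols, ← Matrix.fromBlocks_one] at h
  have h11 := congrArg Matrix.toBlocks₁₁ h
  have h12 := congrArg Matrix.toBlocks₁₂ h
  have h22 := congrArg Matrix.toBlocks₂₂ h
  rw [Matrix.toBlocks_fromBlocks₁₁, Matrix.toBlocks_fromBlocks₁₁] at h11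
  rw [Matrix.toBlocks_fromBlocks₁₂, Matrix.toBlocks_fromBlocks₁₂] at h12
  rw [Matrix.toBlocks_fromBlocks₂₂, Matrix.toBlocks_fromBlocks₂₂] at h22
  exact ⟨h11, h12, h22⟩

lemma cols_sum [Fintype α] [Fintype β] [Fintype γ] [DecidableEq α]
    {W₁ : Matrix α β ℂ} {W₂ : Matrix α γ ℂ}
    (h : fromCols W₁ W₂ * (fromCols W₁ W₂)ᴴ = 1) :
    W₁ * W₁ᴴ + W₂ * W₂ᴴ = 1 := by
  rwa [Matrix.conjTranspose_fromCols_eq_fromRows_conjTranspose,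
    Matrix.fromCols_mul_fromRows] at h

lemma div_sq_le {a b c : ℝ} (hb : 0 ≤ b) (h : a ≤ c ^ 2 * b) : a / c ^ 2 ≤ b := by
  rcases eq_or_ne c 0 with hc | hc
  · simp [hc]; exact hb
  · rw [div_le_iff₀ (by positivity)]
    rw [mul_comm] at h
    exact h

lemma spec_conj_le [Fintype α] [Fintype β] [Fintype γ] [Fintype δ]
    [DecidableEq α] [DecidableEq β] [DecidableEq γ] [DecidableEq δ]
    {W₁ : Matrix α β ℂ} {W₂ : Matrix γ δ ℂ}
    (h₁ : W₁ᴴ * W₁ = 1) (h₂ : W₂ᴴ * W₂ = 1) (M : Matrix α γ ℂ) :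
    spec (W₁ᴴ * (M * W₂)) ≤ spec M := by
  have a1 : spec W₁ᴴ ≤ 1 := by rw [spec_conjTranspose]; exact spec_semiUnitary_le h₁
  have a2 : spec W₂ ≤ 1 := spec_semiUnitary_le h₂
  have b1 := spec_mul_le W₁ᴴ (M * W₂)
  have b2 := spec_mul_le M W₂
  have n1 := spec_nonneg W₁ᴴ
  have n2 := spec_nonneg W₂
  have n3 := spec_nonneg M
  have n4 := spec_nonneg (M * W₂)
  nlinarith

end Stmt18Aux

/-- `X` is the Moore–Penrose inverse of `M` (the four Penrose equations). -/
def IsMoorePenrose {α β : Type*} [Fintype α] [Fintype β]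
    (M : Matrix α β ℂ) (X : Matrix β α ℂ) : Prop :=
  M * X * M = M ∧ X * M * X = X ∧ (M * X)ᴴ = M * X ∧ (X * M)ᴴ = X * M

open Stmt18Aux

theorem stmt18 {m n r s : ℕ}
    (A B : Matrix (Fin m) (Fin n) ℂ)
    (hrankA : A.rank = r) (hrankB : B.rank = s)
    (σ : Fin r → ℝ) (hσmono : Antitone σ) (hσpos : ∀ i, 0 < σ i)
    (τ : Fin s → ℝ) (hτmono : Antitone τ) (hτpos : ∀ i, 0 < τ i)
    (U₁ : Matrix (Fin m) (Fin r) ℂ) (U₂ : Matrix (Fin m) (Fin (m - r)) ℂ)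
    (V₁ : Matrix (Fin n) (Fin r) ℂ) (V₂ : Matrix (Fin n) (Fin (n - r)) ℂ)
    (tU₁ : Matrix (Fin m) (Fin s) ℂ) (tU₂ : Matrix (Fin m) (Fin (m - s)) ℂ)
    (tV₁ : Matrix (Fin n) (Fin s) ℂ) (tV₂ : Matrix (Fin n) (Fin (n - s)) ℂ)
    (hU : (fromCols U₁ U₂)ᴴ * fromCols U₁ U₂ = 1
        ∧ fromCols U₁ U₂ * (fromCols U₁ U₂)ᴴ = 1)
    (hV : (fromCols V₁ V₂)ᴴ * fromCols V₁ V₂ = 1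
        ∧ fromCols V₁ V₂ * (fromCols V₁ V₂)ᴴ = 1)
    (htU : (fromCols tU₁ tU₂)ᴴ * fromCols tU₁ tU₂ = 1
        ∧ fromCols tU₁ tU₂ * (fromCols tU₁ tU₂)ᴴ = 1)
    (htV : (fromCols tV₁ tV₂)ᴴ * fromCols tV₁ tV₂ = 1
        ∧ fromCols tV₁ tV₂ * (fromCols tV₁ tV₂)ᴴ = 1)
    (hAsvd : A = U₁ * diagonal (fun i => (σ i : ℂ)) * V₁ᴴ)
    (hBsvd : B = tU₁ * diagonal (fun i => (τ i : ℂ)) * tV₁ᴴ)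
    (E : Matrix (Fin m) (Fin n) ℂ) (hE : E = B - A)
    (Adag Bdag : Matrix (Fin n) (Fin m) ℂ)
    (hAdag : Adag = V₁ * diagonal (fun i => ((σ i : ℂ))⁻¹) * U₁ᴴ)
    (hBdag : Bdag = tV₁ * diagonal (fun i => ((τ i : ℂ))⁻¹) * tU₁ᴴ) :
    frobSq (Bdag - Adag)
        ≤ spec Bdag ^ 2 * frobSq (tU₁ᴴ * U₂) + spec Adag ^ 2 * frobSq (tV₂ᴴ * V₁)
          + frobSq (Bdag * E * Adag)
    ∧ frobSq (Bdag - Adag)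
        ≥ frobSq (tU₁ᴴ * U₂) / spec B ^ 2 + frobSq (tV₂ᴴ * V₁) / spec A ^ 2
          + frobSq (Bdag * E * Adag) := by
  obtain ⟨hU1, hUo, hU2⟩ := blocks_ortho hU.1
  have hUsum := cols_sum hU.2
  obtain ⟨hV1, hVo, hV2⟩ := blocks_ortho hV.1
  obtain ⟨htU1, htUo, htU2⟩ := blocks_ortho htU.1
  obtain ⟨htV1, htVo, htV2⟩ := blocks_ortho htV.1
  have htVsum := cols_sum htV.2
  set Dσ : Matrix (Fin r) (Fin r) ℂ := diagonal (fun i => (σ i : ℂ)) with hDσ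
  set Dσi : Matrix (Fin r) (Fin r) ℂ := diagonal (fun i => ((σ i : ℂ))⁻¹) with hDσi
  set Dτ : Matrix (Fin s) (Fin s) ℂ := diagonal (fun i => (τ i : ℂ)) with hDτ
  set Dτi : Matrix (Fin s) (Fin s) ℂ := diagonal (fun i => ((τ i : ℂ))⁻¹) with hDτi
  have hσd : Dσ * Dσi = 1 := by
    rw [hDσ, hDσi, diagonal_mul_diagonal]
    have hfun : (fun i => (σ i : ℂ) * ((σ i : ℂ))⁻¹) = fun _ => 1 :=
      funext fun i => mul_inv_cancel₀ (Complex.ofReal_ne_zero.mpr (hσpos i).ne')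
    rw [hfun, diagonal_one]
  have hσd' : Dσi * Dσ = 1 := by
    rw [hDσ, hDσi, diagonal_mul_diagonal]
    have hfun : (fun i => ((σ i : ℂ))⁻¹ * (σ i : ℂ)) = fun _ => 1 :=
      funext fun i => inv_mul_cancel₀ (Complex.ofReal_ne_zero.mpr (hσpos i).ne')
    rw [hfun, diagonal_one]
  have hτd : Dτ * Dτi = 1 := by
    rw [hDτ, hDτi, diagonal_mul_diagonal]
    have hfun : (fun i => (τ i : ℂ) * ((τ i : ℂ))⁻¹) = fun _ => 1 :=
      funext fun i => mul_inv_cancel₀ (Complex.ofReal_ne_zero.mpr (hτpos i).ne')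
    rw [hfun, diagonal_one]
  have hτd' : Dτi * Dτ = 1 := by
    rw [hDτ, hDτi, diagonal_mul_diagonal]
    have hfun : (fun i => ((τ i : ℂ))⁻¹ * (τ i : ℂ)) = fun _ => 1 :=
      funext fun i => inv_mul_cancel₀ (Complex.ofReal_ne_zero.mpr (hτpos i).ne')
    rw [hfun, diagonal_one]
  have hAAd : A * Adag = U₁ * U₁ᴴ := by
    rw [hAsvd, hAdag]; simp only [Matrix.mul_assoc]
    rw [mul_assoc_cancel_left hV1, mul_assoc_cancel_left hσd]
  have hBdB : Bdag * B = tV₁ * tV₁ᴴ := by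
    rw [hBsvd, hBdag]; simp only [Matrix.mul_assoc]
    rw [mul_assoc_cancel_left htU1, mul_assoc_cancel_left hτd']
  have hU2s : U₂ * U₂ᴴ = 1 - U₁ * U₁ᴴ := by rw [eq_sub_iff_add_eq, add_comm]; exact hUsum
  have htV2s : tV₂ * tV₂ᴴ = 1 - tV₁ * tV₁ᴴ := by rw [eq_sub_iff_add_eq, add_comm]; exact htVsum
  have hUo' : U₂ᴴ * U₁ = 0 := by
    have := congrArg Matrix.conjTranspose hUo
    simpa using this
  have i1 : Bdag * (U₂ * U₂ᴴ) = Bdag - Bdag * A * Adag := by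
    rw [hU2s, Matrix.mul_sub, Matrix.mul_one, Matrix.mul_assoc Bdag A Adag, hAAd]
  have i2 : tV₂ * (tV₂ᴴ * Adag) = Adag - Bdag * B * Adag := by
    rw [← Matrix.mul_assoc, htV2s, Matrix.sub_mul, Matrix.one_mul, ← hBdB]
  have hdecomp : Bdag - Adag
      = -(Bdag * E * Adag) + Bdag * (U₂ * U₂ᴴ) + -(tV₂ * (tV₂ᴴ * Adag)) := by
    rw [i1, i2, hE, Matrix.mul_sub, Matrix.sub_mul]
    abel
  have o12 : Matrix.trace ((-(Bdag * E * Adag))ᴴ * (Bdag * (U₂ * U₂ᴴ))) = 0 := by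
    have e1 : Bdag * E * Adag = (Bdag * (E * (V₁ * Dσi))) * U₁ᴴ := by
      rw [hAdag]; simp only [Matrix.mul_assoc]
    have e2 : Bdag * (U₂ * U₂ᴴ) = (Bdag * U₂) * U₂ᴴ := by simp only [Matrix.mul_assoc]
    rw [Matrix.conjTranspose_neg, Matrix.neg_mul, Matrix.trace_neg, neg_eq_zero, e1, e2]
    exact trace_zero_right (by simpa using hUo') _ _
  have o13 : Matrix.trace ((-(Bdag * E * Adag))ᴴ * (-(tV₂ * (tV₂ᴴ * Adag)))) = 0 := by
    have e3 : Bdag * E * Adag = tV₁ * (Dτi * (tU₁ᴴ * (E * Adag))) := by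
      rw [hBdag]; simp only [Matrix.mul_assoc]
    simp only [Matrix.conjTranspose_neg, Matrix.neg_mul, Matrix.mul_neg, neg_neg]
    rw [e3]
    exact trace_zero_left htVo _ _
  have o23 : Matrix.trace ((Bdag * (U₂ * U₂ᴴ))ᴴ * (-(tV₂ * (tV₂ᴴ * Adag)))) = 0 := by
    have e4 : Bdag * (U₂ * U₂ᴴ) = tV₁ * (Dτi * (tU₁ᴴ * (U₂ * U₂ᴴ))) := by
      rw [hBdag]; simp only [Matrix.mul_assoc]
    simp only [Matrix.mul_neg, Matrix.trace_neg, neg_eq_zero]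
    rw [e4]
    exact trace_zero_left htVo _ _
  have hpyth : frobSq (Bdag - Adag)
      = frobSq (Bdag * E * Adag) + frobSq (Bdag * (U₂ * U₂ᴴ))
        + frobSq (tV₂ * (tV₂ᴴ * Adag)) := by
    rw [hdecomp, frobSq_add_add _ _ _ o12 o13 o23, frobSq_neg, frobSq_neg]
  have f2 : frobSq (Bdag * (U₂ * U₂ᴴ)) = frobSq (Dτi * (tU₁ᴴ * U₂)) := by
    have e : Bdag * (U₂ * U₂ᴴ) = tV₁ * ((Dτi * (tU₁ᴴ * U₂)) * U₂ᴴ) := by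
      rw [hBdag]; simp only [Matrix.mul_assoc]
    rw [e, frobSq_unitary_left htV1, frobSq_unitary_right (by simpa using hU2)]
  have f3 : frobSq (tV₂ * (tV₂ᴴ * Adag)) = frobSq ((tV₂ᴴ * V₁) * Dσi) := by
    have e : tV₂ * (tV₂ᴴ * Adag) = tV₂ * (((tV₂ᴴ * V₁) * Dσi) * U₁ᴴ) := by
      rw [hAdag]; simp only [Matrix.mul_assoc]
    rw [e, frobSq_unitary_left htV2, frobSq_unitary_right (by simpa using hU1)]
  have eτi : Dτi = tV₁ᴴ * (Bdag * tU₁) := by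
    rw [hBdag]; simp only [Matrix.mul_assoc]
    rw [mul_assoc_cancel_left htV1, htU1, Matrix.mul_one]
  have eσi : Dσi = V₁ᴴ * (Adag * U₁) := by
    rw [hAdag]; simp only [Matrix.mul_assoc]
    rw [mul_assoc_cancel_left hV1, hU1, Matrix.mul_one]
  have eτ : Dτ = tU₁ᴴ * (B * tV₁) := by
    rw [hBsvd]; simp only [Matrix.mul_assoc]
    rw [mul_assoc_cancel_left htU1, htV1, Matrix.mul_one]
  have eσ : Dσ = U₁ᴴ * (A * V₁) := by
    rw [hAsvd]; simp only [Matrix.mul_assoc]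
    rw [mul_assoc_cancel_left hU1, hV1, Matrix.mul_one]
  have sBd : spec Dτi ≤ spec Bdag := by rw [eτi]; exact spec_conj_le htV1 htU1 Bdag
  have sAd : spec Dσi ≤ spec Adag := by rw [eσi]; exact spec_conj_le hV1 hU1 Adag
  have sB : spec Dτ ≤ spec B := by rw [eτ]; exact spec_conj_le htU1 htV1 B
  have sA : spec Dσ ≤ spec A := by rw [eσ]; exact spec_conj_le hU1 hV1 A
  have ub2 : frobSq (Dτi * (tU₁ᴴ * U₂)) ≤ spec Bdag ^ 2 * frobSq (tU₁ᴴ * U₂) :=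
    (frobSq_mul_le _ _).trans (mul_le_mul_of_nonneg_right
      (pow_le_pow_left₀ (spec_nonneg _) sBd 2) (frobSq_nonneg _))
  have ub3 : frobSq ((tV₂ᴴ * V₁) * Dσi) ≤ spec Adag ^ 2 * frobSq (tV₂ᴴ * V₁) :=
    (frobSq_mul_right_le _ _).trans (mul_le_mul_of_nonneg_right
      (pow_le_pow_left₀ (spec_nonneg _) sAd 2) (frobSq_nonneg _))
  have lb2 : frobSq (tU₁ᴴ * U₂) / spec B ^ 2 ≤ frobSq (Dτi * (tU₁ᴴ * U₂)) := by
    apply div_sq_le (frobSq_nonneg _)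
    have e : tU₁ᴴ * U₂ = Dτ * (Dτi * (tU₁ᴴ * U₂)) := (mul_assoc_cancel_left hτd _).symm
    calc frobSq (tU₁ᴴ * U₂) = frobSq (Dτ * (Dτi * (tU₁ᴴ * U₂))) := by rw [← e]
      _ ≤ spec Dτ ^ 2 * frobSq (Dτi * (tU₁ᴴ * U₂)) := frobSq_mul_le _ _
      _ ≤ spec B ^ 2 * frobSq (Dτi * (tU₁ᴴ * U₂)) := mul_le_mul_of_nonneg_right
          (pow_le_pow_left₀ (spec_nonneg _) sB 2) (frobSq_nonneg _)
  have lb3 : frobSq (tV₂ᴴ * V₁) / spec A ^ 2 ≤ frobSq ((tV₂ᴴ * V₁) * Dσi) := by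
    apply div_sq_le (frobSq_nonneg _)
    have e : tV₂ᴴ * V₁ = ((tV₂ᴴ * V₁) * Dσi) * Dσ := by
      rw [Matrix.mul_assoc, hσd', Matrix.mul_one]
    calc frobSq (tV₂ᴴ * V₁) = frobSq (((tV₂ᴴ * V₁) * Dσi) * Dσ) := by rw [← e]
      _ ≤ spec Dσ ^ 2 * frobSq ((tV₂ᴴ * V₁) * Dσi) := frobSq_mul_right_le _ _
      _ ≤ spec A ^ 2 * frobSq ((tV₂ᴴ * V₁) * Dσi) := mul_le_mul_of_nonneg_right
          (pow_le_pow_left₀ (spec_nonneg _) sA 2) (frobSq_nonneg _)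
  constructor
  · rw [hpyth, f2, f3]
    linarith [ub2, ub3]
  · rw [ge_iff_le, hpyth, f2, f3]
    linarith [lb2, lb3]
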